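/- Let b ∈ ℝ, c ∈ ℝ, and let q, q' > 0 and p, p' ∈ ℝ satisfy b ≤ q²·q'², q'·√(1 − b/(q²·q'²)) + p = c·q, and p' = q·√(1 − b/(q²·q'²)). Then the one degree of freedom energy is preserved: p'² + q'² + b/q'² − c·q'·p' = p² + q² + b/q² − c·q·p. Consequently, for the N degrees of freedom anisotropic discrete Smorodinsky–Winternitz map, in which the k-th component is updated with constant cₖ, each of the N functions 𝖧ₖ(q,p) = (1/2)·(pₖ² + qₖ² + bₖ/qₖ² − cₖ·qₖ·pₖ) is separately invariant. -/
import Mathlib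


open Finset

lemma dSW_energy_aux (b c : ℝ) (q q' p p' : ℝ)
    (hq : 0 < q) (hq' : 0 < q') (hb : b ≤ q ^ 2 * q' ^ 2)
    (h1 : q' * Real.sqrt (1 - b / (q ^ 2 * q' ^ 2)) + p = c * q)
    (h2 : p' = q * Real.sqrt (1 - b / (q ^ 2 * q' ^ 2))) :
    p' ^ 2 + q' ^ 2 + b / q' ^ 2 - c * q' * p'
      = p ^ 2 + q ^ 2 + b / q ^ 2 - c * q * p := by
  have hqq : (0:ℝ) < q ^ 2 * q' ^ 2 := by positivity
  have hs2 : Real.sqrt (1 - b / (q ^ 2 * q' ^ 2)) ^ 2 = 1 - b / (q ^ 2 * q' ^ 2) := by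
    rw [Real.sq_sqrt]
    have : b / (q ^ 2 * q' ^ 2) ≤ 1 := (div_le_one hqq).2 hb
    linarith
  have hp : p = c * q - q' * Real.sqrt (1 - b / (q ^ 2 * q' ^ 2)) := by linarith
  subst h2 hp
  generalize hs : Real.sqrt (1 - b / (q ^ 2 * q' ^ 2)) = s at hs2 ⊢
  have hb' : b = q ^ 2 * q' ^ 2 * (1 - s ^ 2) := by
    field_simp at hs2
    nlinarith [hs2]
  subst hb'
  have h1' : q ^ 2 ≠ 0 := by positivity
  have h2' : q' ^ 2 ≠ 0 := by positivity
  field_simp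
  ring

theorem anisotropic_dSW_energy (b c : ℝ) (q q' p p' : ℝ)
    (hq : 0 < q) (hq' : 0 < q') (hb : b ≤ q ^ 2 * q' ^ 2)
    (h1 : q' * Real.sqrt (1 - b / (q ^ 2 * q' ^ 2)) + p = c * q)
    (h2 : p' = q * Real.sqrt (1 - b / (q ^ 2 * q' ^ 2))) :
    (p' ^ 2 + q' ^ 2 + b / q' ^ 2 - c * q' * p'
      = p ^ 2 + q ^ 2 + b / q ^ 2 - c * q * p)
    ∧ ∀ (N : ℕ), 1 ≤ N → ∀ (B cc P P' : Fin N → ℝ) (Q Q' : Fin N → ℝ),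
        (∀ k, 0 < Q k) → (∀ k, 0 < Q' k) →
        (∀ k, B k ≤ (Q k) ^ 2 * (Q' k) ^ 2) →
        (∀ k, Q' k * Real.sqrt (1 - B k / ((Q k) ^ 2 * (Q' k) ^ 2)) + P k = cc k * Q k) →
        (∀ k, P' k = Q k * Real.sqrt (1 - B k / ((Q k) ^ 2 * (Q' k) ^ 2))) →
        ∀ k, (1 / 2) * ((P' k) ^ 2 + (Q' k) ^ 2 + B k / (Q' k) ^ 2 - cc k * Q' k * P' k)
          = (1 / 2) * ((P k) ^ 2 + (Q k) ^ 2 + B k / (Q k) ^ 2 - cc k * Q k * P k) := by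
  refine ⟨dSW_energy_aux b c q q' p p' hq hq' hb h1 h2, ?_⟩
  intro N _ B cc P P' Q Q' hQ hQ' hB hh1 hh2 k
  rw [dSW_energy_aux (B k) (cc k) (Q k) (Q' k) (P k) (P' k) (hQ k) (hQ' k) (hB k) (hh1 k) (hh2 k)]
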